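/- Let α ∈ (0,2), let L : (0,∞) → (0,∞) be slowly varying at ∞, and let ψ : ℝ → ℂ satisfy: ψ(−θ) is the complex conjugate of ψ(θ); Re(ψ(θ)) ≤ 0 for all θ; and there is a constant c₁ > 0 such that ‖ψ(θ)‖ ≤ c₁ |θ|^{α} L(|θ|^{-1}) whenever 0 < |θ| ≤ 1. Suppose that for each s > 0, μ_s is a Borel probability measure on ℝ whose characteristic function equals θ ↦ exp(s ψ(θ)). Then there exist constants c₀ > 0 and x₀ > 0 such that for all s > 0 and all x > x₀, μ_s({ y ∈ ℝ : |y| > x }) ≤ c₀ s x^{-α} L(x). -/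

import Mathlib

open Filter Set MeasureTheory

lemma trig1 (A B : ℝ) : 1 - Real.cos (A+B) ≤ 2*(1-Real.cos A) + 2*(1-Real.cos B) := by
  have hA := Real.sin_sq_add_cos_sq A
  have hB := Real.sin_sq_add_cos_sq B
  have h := Real.cos_add A B
  nlinarith [sq_nonneg (Real.sin A - Real.sin B), sq_nonneg (Real.cos A + Real.cos B - 2)]

lemma trig2 (c : ℝ) : 1 - Real.cos c ≤ |c| := by
  rcases le_or_gt (|c|) 2 with h | h
  · have h1 : 1 - Real.cos c = 2 * Real.sin (c/2)^2 := by
      have h2 := Real.cos_two_mul (c/2)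
      have h3 := Real.sin_sq_add_cos_sq (c/2)
      have : 2 * (c/2) = c := by ring
      rw [this] at h2; nlinarith
    have h2 : |Real.sin (c/2)| ≤ |c/2| := Real.abs_sin_le_abs
    have h3 : |Real.sin (c/2)| ≤ 1 := Real.abs_sin_le_one _
    calc 1 - Real.cos c = 2 * |Real.sin (c/2)|^2 := by rw [h1, sq_abs]
    _ ≤ 2 * (|c/2| * 1) := by nlinarith [abs_nonneg (Real.sin (c/2))]
    _ = |c| := by rw [abs_div]; simp; ring
  · nlinarith [Real.neg_one_le_cos c]

lemma expb (z : ℂ) (hz : z.re ≤ 0) : 1 - (Complex.exp z).re ≤ 2*‖z‖ := by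
  rw [Complex.exp_re]
  have h1 : Real.exp z.re ≤ 1 := Real.exp_le_one_iff.mpr hz
  have h2 : 1 - Real.exp z.re ≤ -z.re := by nlinarith [Real.add_one_le_exp z.re]
  have h3 : 1 - Real.cos z.im ≤ |z.im| := trig2 z.im
  have h4 : |z.re| ≤ ‖z‖ := Complex.abs_re_le_norm z
  have h5 : |z.im| ≤ ‖z‖ := Complex.abs_im_le_norm z
  have h0 : 0 ≤ Real.exp z.re := (Real.exp_pos _).le
  have h6 : 1 - Real.cos z.im ≥ 0 := by nlinarith [Real.cos_le_one z.im]
  calc 1 - Real.exp z.re * Real.cos z.im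
      = (1 - Real.exp z.re) + Real.exp z.re * (1 - Real.cos z.im) := by ring
    _ ≤ -z.re + |z.im| := by nlinarith
    _ ≤ 2*‖z‖ := by nlinarith [neg_abs_le z.re, le_abs_self (-z.re), abs_neg z.re]

set_option maxHeartbeats 2000000 in
theorem stmt_2 (α : ℝ) (hα : 0 < α) (hα2 : α < 2)
    (L : ℝ → ℝ) (hLpos : ∀ x > (0:ℝ), 0 < L x)
    (hLsv : ∀ c > (0:ℝ), Tendsto (fun x => L (c * x) / L x) atTop (nhds 1))
    (ψ : ℝ → ℂ)
    (hconj : ∀ θ : ℝ, ψ (-θ) = starRingEnd ℂ (ψ θ))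
    (hre : ∀ θ : ℝ, (ψ θ).re ≤ 0)
    (c₁ : ℝ) (hc₁ : 0 < c₁)
    (hbound : ∀ θ : ℝ, 0 < |θ| → |θ| ≤ 1 → ‖ψ θ‖ ≤ c₁ * |θ| ^ α * L (|θ|⁻¹))
    (μ : ℝ → Measure ℝ) (hprob : ∀ s > (0:ℝ), IsProbabilityMeasure (μ s))
    (hchar : ∀ s > (0:ℝ), ∀ θ : ℝ,
      ∫ x, Complex.exp (Complex.I * θ * x) ∂(μ s) = Complex.exp ((s : ℂ) * ψ θ)) :
    ∃ c₀ > (0:ℝ), ∃ x₀ > (0:ℝ), ∀ s > (0:ℝ), ∀ x > x₀,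
      (μ s {y : ℝ | x < |y|}).toReal ≤ c₀ * s * x ^ (-α) * L x := by
  classical
  -- choose base b
  set b : ℕ := ⌈(16:ℝ) ^ (α⁻¹)⌉₊ + 2 with hbdef
  have hb2 : 2 ≤ b := by omega
  have hbR1 : (1:ℝ) ≤ (b:ℝ) := by exact_mod_cast Nat.one_le_iff_ne_zero.mpr (by omega)
  have hbRpos : (0:ℝ) < (b:ℝ) := lt_of_lt_of_le one_pos hbR1
  have hbα : (16:ℝ) ≤ (b:ℝ) ^ α := by
    have h1 : ((16:ℝ) ^ (α⁻¹)) ≤ (b:ℝ) := by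
      calc ((16:ℝ) ^ (α⁻¹)) ≤ (⌈(16:ℝ) ^ (α⁻¹)⌉₊ : ℝ) := Nat.le_ceil _
      _ ≤ (b:ℝ) := by exact_mod_cast Nat.le_add_right _ 2
    calc (16:ℝ) = ((16:ℝ) ^ (α⁻¹)) ^ α := by
          rw [← Real.rpow_mul (by norm_num : (0:ℝ) ≤ 16), inv_mul_cancel₀ hα.ne', Real.rpow_one]
      _ ≤ (b:ℝ) ^ α := Real.rpow_le_rpow (Real.rpow_nonneg (by norm_num) _) h1 hα.le
  -- slow variation thresholds
  obtain ⟨Xb, hXb⟩ : ∃ X : ℝ, ∀ y ≥ X, L ((b:ℝ) * y) / L y < 2 :=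
    eventually_atTop.mp (((hLsv (b:ℝ) hbRpos)).eventually_lt_const one_lt_two)
  obtain ⟨Xh, hXh⟩ : ∃ X : ℝ, ∀ y ≥ X, L ((1/2 : ℝ) * y) / L y < 2 :=
    eventually_atTop.mp (((hLsv (1/2 : ℝ) (by norm_num))).eventually_lt_const one_lt_two)
  set Xb' : ℝ := max Xb 1 with hXb'def
  set Xh' : ℝ := max Xh 1 with hXh'def
  have hXb1 : (1:ℝ) ≤ Xb' := le_max_right _ _
  have hXh1 : (1:ℝ) ≤ Xh' := le_max_right _ _
  have hXb' : ∀ y : ℝ, Xb' ≤ y → L ((b:ℝ) * y) ≤ 2 * L y := by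
    intro y hy
    have hy0 : 0 < y := lt_of_lt_of_le one_pos (hXb1.trans hy)
    have := hXb y ((le_max_left _ _).trans hy)
    exact ((div_lt_iff₀ (hLpos y hy0)).mp this).le
  have hXh' : ∀ y : ℝ, Xh' ≤ y → L (y / 2) ≤ 2 * L y := by
    intro y hy
    have hy0 : 0 < y := lt_of_lt_of_le one_pos (hXh1.trans hy)
    have := hXh y ((le_max_left _ _).trans hy)
    have h2 : (1/2 : ℝ) * y = y / 2 := by ring
    rw [h2] at this
    exact ((div_lt_iff₀ (hLpos y hy0)).mp this).le
  refine ⟨2^(b+9) * c₁, by positivity, 2*Xb' + Xh' + 2, by positivity, ?_⟩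
  intro s hs x hx
  haveI := hprob s hs
  have hx2 : (2:ℝ) < x := by nlinarith
  have hx0 : (0:ℝ) < x := by linarith
  have hxb : Xb' ≤ x/2 := by nlinarith
  have hxh : Xh' ≤ x := by nlinarith
  set u : ℝ := 2/x with hudef
  have hu0 : 0 < u := by positivity
  have hu1 : u ≤ 1 := by rw [hudef, div_le_one hx0]; linarith
  -- the function N
  set N : ℝ → ℝ := fun θ => ∫ y, (1 - Real.cos (θ*y)) ∂(μ s) with hNdef
  have hcont : ∀ θ : ℝ, Continuous (fun y : ℝ => 1 - Real.cos (θ*y)) := by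
    intro θ
    exact continuous_const.sub (Real.continuous_cos.comp (continuous_const.mul continuous_id))
  have habs : ∀ (θ y : ℝ), ‖1 - Real.cos (θ*y)‖ ≤ 2 := by
    intro θ y
    rw [Real.norm_eq_abs, abs_le]
    constructor <;> nlinarith [Real.cos_le_one (θ*y), Real.neg_one_le_cos (θ*y)]
  have hint : ∀ θ : ℝ, Integrable (fun y : ℝ => 1 - Real.cos (θ*y)) (μ s) := by
    intro θ
    exact Integrable.mono' (integrable_const 2) (hcont θ).aestronglyMeasurable
      (ae_of_all _ fun y => habs θ y)
  have hintc : ∀ θ : ℝ, Integrable (fun y : ℝ => Real.cos (θ*y)) (μ s) := by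
    intro θ
    exact Integrable.mono' (integrable_const 1)
      ((Real.continuous_cos.comp (continuous_const.mul continuous_id)).aestronglyMeasurable)
      (ae_of_all _ fun y => by rw [Real.norm_eq_abs]; exact Real.abs_cos_le_one _)
  have hN0 : N 0 = 0 := by simp [hNdef]
  have hNnn : ∀ θ : ℝ, 0 ≤ N θ := by
    intro θ
    exact integral_nonneg fun y => sub_nonneg.mpr (Real.cos_le_one _)
  have hNadd : ∀ p q : ℝ, N (p+q) ≤ 2 * N p + 2 * N q := by
    intro p q
    have h1 : ∀ y : ℝ, 1 - Real.cos ((p+q)*y) ≤ 2*(1-Real.cos (p*y)) + 2*(1-Real.cos (q*y)) := by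
      intro y
      have := trig1 (p*y) (q*y)
      have he : (p+q)*y = p*y + q*y := by ring
      rw [he]; exact this
    calc N (p+q) ≤ ∫ y, (2*(1-Real.cos (p*y)) + 2*(1-Real.cos (q*y))) ∂(μ s) := by
          exact integral_mono (hint _) (((hint p).const_mul 2).add ((hint q).const_mul 2)) h1
      _ = 2 * N p + 2 * N q := by
          rw [integral_add ((hint p).const_mul 2) ((hint q).const_mul 2),
            integral_const_mul, integral_const_mul]
  have hNmul : ∀ (c : ℕ) (t : ℝ), N ((c:ℝ)*t) ≤ (2^(c+1) - 2) * N t := by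
    intro c
    induction c with
    | zero =>
      intro t
      have he : ((0:ℕ):ℝ)*t = 0 := by norm_num
      rw [he, hN0, pow_one]
      nlinarith [hNnn t]
    | succ c ih =>
      intro t
      have h1 : ((c+1 : ℕ):ℝ)*t = (c:ℝ)*t + t := by push_cast; ring
      rw [h1]
      have h2 := hNadd ((c:ℝ)*t) t
      have h3 := ih t
      have h5 := hNnn t
      have h6 : (2:ℝ)^(c+1+1) = 2 * 2^(c+1) := by ring
      calc N ((c:ℝ)*t + t) ≤ 2 * N ((c:ℝ)*t) + 2 * N t := h2
        _ ≤ 2 * ((2^(c+1) - 2) * N t) + 2 * N t := by nlinarith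
        _ ≤ (2^(c+1+1) - 2) * N t := by rw [h6]; nlinarith
  -- representation via the characteristic function
  have hNrep : ∀ θ : ℝ, N θ = 1 - (Complex.exp ((s:ℂ) * ψ θ)).re := by
    intro θ
    have hie : Integrable (fun y : ℝ => Complex.exp (Complex.I * θ * y)) (μ s) := by
      refine Integrable.mono' (integrable_const 1) ?_ (ae_of_all _ fun y => ?_)
      · exact (Complex.continuous_exp.comp
          ((continuous_const.mul Complex.continuous_ofReal))).aestronglyMeasurable
      · rw [Complex.norm_exp]
        simp
    have h1 : ∫ y, Real.cos (θ*y) ∂(μ s) = (Complex.exp ((s:ℂ) * ψ θ)).re := by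
      rw [← hchar s hs θ]
      have hre2 := integral_re hie
      simp only [RCLike.re_to_complex] at hre2
      rw [← hre2]
      congr 1
      funext y
      have he : Complex.I * (θ:ℂ) * (y:ℂ) = ((θ*y : ℝ):ℂ) * Complex.I := by push_cast; ring
      rw [he, Complex.exp_ofReal_mul_I_re]
    have h2 : N θ = 1 - ∫ y, Real.cos (θ*y) ∂(μ s) := by
      have := integral_sub (integrable_const (1:ℝ)) (hintc θ)
      simp only [hNdef]
      rw [this]
      simp
    rw [h2, h1]
  -- bound through ψ
  have hNψ : ∀ θ : ℝ, 0 < θ → θ ≤ 1 → N θ ≤ 2 * s * (c₁ * θ ^ α * L θ⁻¹) := by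
    intro θ h0 h1
    have hz : ((s:ℂ) * ψ θ).re ≤ 0 := by
      have : ((s:ℂ) * ψ θ).re = s * (ψ θ).re := by
        simp [Complex.mul_re]
      rw [this]
      exact mul_nonpos_of_nonneg_of_nonpos hs.le (hre θ)
    have h2 := expb ((s:ℂ) * ψ θ) hz
    rw [hNrep θ]
    have h3 : ‖(s:ℂ) * ψ θ‖ = s * ‖ψ θ‖ := by
      rw [norm_mul, Complex.norm_real, Real.norm_eq_abs, abs_of_pos hs]
    have h4 : ‖ψ θ‖ ≤ c₁ * θ ^ α * L θ⁻¹ := by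
      have := hbound θ (by rwa [abs_of_pos h0]) (by rwa [abs_of_pos h0])
      rwa [abs_of_pos h0] at this
    calc 1 - (Complex.exp ((s:ℂ) * ψ θ)).re ≤ 2 * ‖(s:ℂ) * ψ θ‖ := h2
      _ = 2 * s * ‖ψ θ‖ := by rw [h3]; ring
      _ ≤ 2 * s * (c₁ * θ ^ α * L θ⁻¹) :=
          mul_le_mul_of_nonneg_left h4 (by linarith)
  -- chain of slow variation
  have hLchain : ∀ i : ℕ, L ((b:ℝ)^i * (x/2)) ≤ 2^i * L (x/2) := by
    intro i
    induction i with
    | zero => simp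
    | succ i ih =>
      have hbi : (1:ℝ) ≤ (b:ℝ)^i := one_le_pow₀ hbR1
      have harg : Xb' ≤ (b:ℝ)^i * (x/2) := by nlinarith
      have h1 := hXb' ((b:ℝ)^i * (x/2)) harg
      have he : (b:ℝ)^(i+1) * (x/2) = (b:ℝ) * ((b:ℝ)^i * (x/2)) := by ring
      rw [he]
      calc L ((b:ℝ) * ((b:ℝ)^i * (x/2))) ≤ 2 * L ((b:ℝ)^i * (x/2)) := h1
        _ ≤ 2 * (2^i * L (x/2)) := by
            have h2 : (0:ℝ) < (b:ℝ)^i * (x/2) := by nlinarith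
            nlinarith [hLpos _ h2, ih]
        _ = 2^(i+1) * L (x/2) := by ring
  have hLhalf : L (x/2) ≤ 2 * L x := hXh' x hxh
  have hLxpos : 0 < L x := hLpos x hx0
  -- the E sequence and its bound
  have hbαpos : (0:ℝ) < (b:ℝ)^α := lt_of_lt_of_le (by norm_num) hbα
  have hEb : ∀ i : ℕ, N (u/(b:ℝ)^i) ≤ (4 * s * c₁ * u ^ α * L x) * (2/(b:ℝ)^α)^i := by
    intro i
    have hbi : (0:ℝ) < (b:ℝ)^i := pow_pos hbRpos i
    have hbi1 : (1:ℝ) ≤ (b:ℝ)^i := one_le_pow₀ hbR1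
    set θi : ℝ := u/(b:ℝ)^i with hθidef
    have hθ0 : 0 < θi := div_pos hu0 hbi
    have hθ1 : θi ≤ 1 := by
      rw [hθidef, div_le_one hbi]; linarith
    have hinv : θi⁻¹ = (b:ℝ)^i * (x/2) := by
      rw [hθidef, hudef]
      field_simp
    have hpow : ((b:ℝ)^i) ^ α = ((b:ℝ)^α)^i := by
      rw [← Real.rpow_natCast ((b:ℝ)^α) i, ← Real.rpow_natCast (b:ℝ) i,
        ← Real.rpow_mul hbRpos.le, ← Real.rpow_mul hbRpos.le, mul_comm]
    have hθα : θi ^ α = u ^ α / ((b:ℝ)^α)^i := by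
      rw [hθidef, Real.div_rpow hu0.le hbi.le, hpow]
    have hLθ : L θi⁻¹ ≤ 2^i * (2 * L x) := by
      rw [hinv]
      calc L ((b:ℝ)^i * (x/2)) ≤ 2^i * L (x/2) := hLchain i
        _ ≤ 2^i * (2 * L x) := mul_le_mul_of_nonneg_left hLhalf (by positivity)
    have h1 := hNψ θi hθ0 hθ1
    have huα : (0:ℝ) < u ^ α := Real.rpow_pos_of_pos hu0 α
    have hbαi : (0:ℝ) < ((b:ℝ)^α)^i := pow_pos hbαpos i
    calc N θi ≤ 2 * s * (c₁ * θi ^ α * L θi⁻¹) := h1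
      _ ≤ 2 * s * (c₁ * θi ^ α * (2^i * (2 * L x))) := by
          refine mul_le_mul_of_nonneg_left ?_ (by linarith)
          refine mul_le_mul_of_nonneg_left hLθ ?_
          have : (0:ℝ) < θi ^ α := Real.rpow_pos_of_pos hθ0 α
          positivity
      _ = (4 * s * c₁ * u ^ α * L x) * (2/(b:ℝ)^α)^i := by
          rw [hθα, div_pow]
          field_simp
          ring
  -- bound for the partial sums
  have hsum : ∀ n : ℕ, ∑ i ∈ Finset.range (n+1), (4:ℝ)^i * 2^(b+2) * N (u/(b:ℝ)^i)
      ≤ 2^(b+5) * s * c₁ * u ^ α * L x := by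
    intro n
    have huα : (0:ℝ) < u ^ α := Real.rpow_pos_of_pos hu0 α
    have hG : (0:ℝ) ≤ 4 * s * c₁ * u ^ α * L x := by positivity
    have h1 : ∀ i ∈ Finset.range (n+1), (4:ℝ)^i * 2^(b+2) * N (u/(b:ℝ)^i)
        ≤ 2^(b+2) * (4 * s * c₁ * u ^ α * L x) * (1/2 : ℝ)^i := by
      intro i _
      calc (4:ℝ)^i * 2^(b+2) * N (u/(b:ℝ)^i)
          ≤ (4:ℝ)^i * 2^(b+2) * ((4 * s * c₁ * u ^ α * L x) * (2/(b:ℝ)^α)^i) := by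
            refine mul_le_mul_of_nonneg_left (hEb i) (by positivity)
        _ = 2^(b+2) * (4 * s * c₁ * u ^ α * L x) * ((4 * (2/(b:ℝ)^α))^i) := by
            rw [mul_pow]; ring
        _ ≤ 2^(b+2) * (4 * s * c₁ * u ^ α * L x) * (1/2 : ℝ)^i := by
            refine mul_le_mul_of_nonneg_left (pow_le_pow_left₀ ?_ ?_ i) (by positivity)
            · positivity
            · have he : 4 * (2/(b:ℝ)^α) = 8/(b:ℝ)^α := by ring
              rw [he, div_le_div_iff₀ hbαpos (by norm_num : (0:ℝ) < 2)]
              linarith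
    calc ∑ i ∈ Finset.range (n+1), (4:ℝ)^i * 2^(b+2) * N (u/(b:ℝ)^i)
        ≤ ∑ i ∈ Finset.range (n+1), 2^(b+2) * (4 * s * c₁ * u ^ α * L x) * (1/2 : ℝ)^i :=
          Finset.sum_le_sum h1
      _ = 2^(b+2) * (4 * s * c₁ * u ^ α * L x) * ∑ i ∈ Finset.range (n+1), (1/2 : ℝ)^i := by
          rw [Finset.mul_sum]
      _ ≤ 2^(b+2) * (4 * s * c₁ * u ^ α * L x) * 2 := by
          refine mul_le_mul_of_nonneg_left (sum_geometric_two_le _) (by positivity)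
      _ = 2^(b+5) * s * c₁ * u ^ α * L x := by ring
  -- the digit expansion lemma
  have hbn0 : ∀ n : ℕ, 0 < b^n := fun n => pow_pos (by omega) n
  have hdig : ∀ (n j m : ℕ), m ≤ b^n →
      N (u * m / (b:ℝ)^(n+j)) ≤ ∑ i ∈ Finset.range (n+1), (4:ℝ)^i * 2^(b+2) * N (u/(b:ℝ)^(i+j)) := by
    intro n
    induction n with
    | zero =>
      intro j m hm
      simp only [pow_zero] at hm
      interval_cases m
      · simp only [Nat.cast_zero, mul_zero, zero_div, hN0]
        refine Finset.sum_nonneg fun i _ => ?_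
        have := hNnn (u/(b:ℝ)^(i+j))
        positivity
      · rw [Finset.sum_range_one]
        simp only [Nat.cast_one, mul_one, pow_zero, one_mul, zero_add]
        have h1 : (1:ℝ) ≤ 2^(b+2) := one_le_pow₀ one_le_two
        nlinarith [hNnn (u/(b:ℝ)^j)]
    | succ n ih =>
      intro j m hm
      set d : ℕ := m / b^n with hddef
      set m' : ℕ := m % b^n with hm'def
      have hdb : d ≤ b := by
        rw [hddef]
        have : m ≤ b^n * b := by rw [← pow_succ]; exact hm
        calc m / b^n ≤ (b^n * b) / b^n := Nat.div_le_div_right this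
          _ = b := Nat.mul_div_cancel_left b (hbn0 n)
      have hm'b : m' ≤ b^n := (Nat.mod_lt m (hbn0 n)).le
      have hmd : (m:ℝ) = (b:ℝ)^n * d + m' := by
        have h := (Nat.div_add_mod m (b^n)).symm
        exact_mod_cast h
      have hsplit : u * m / (b:ℝ)^(n+1+j)
          = (d:ℝ) * (u/(b:ℝ)^(1+j)) + u * m' / (b:ℝ)^(n+(1+j)) := by
        have hbnR : (0:ℝ) < (b:ℝ)^n := pow_pos hbRpos n
        have hbjR : (0:ℝ) < (b:ℝ)^(1+j) := pow_pos hbRpos _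
        have he1 : (b:ℝ)^(n+1+j) = (b:ℝ)^n * (b:ℝ)^(1+j) := by
          rw [← pow_add]; congr 1; omega
        have he2 : (b:ℝ)^(n+(1+j)) = (b:ℝ)^n * (b:ℝ)^(1+j) := by
          rw [← pow_add]
        rw [he1, he2, hmd]
        field_simp
      have h1 : N (u * m / (b:ℝ)^(n+1+j))
          ≤ 2 * N ((d:ℝ) * (u/(b:ℝ)^(1+j))) + 2 * N (u * m' / (b:ℝ)^(n+(1+j))) := by
        rw [hsplit]; exact hNadd _ _
      have h2 : N ((d:ℝ) * (u/(b:ℝ)^(1+j))) ≤ 2^(b+1) * N (u/(b:ℝ)^(1+j)) := by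
        calc N ((d:ℝ) * (u/(b:ℝ)^(1+j))) ≤ (2^(d+1) - 2) * N (u/(b:ℝ)^(1+j)) := hNmul d _
          _ ≤ 2^(b+1) * N (u/(b:ℝ)^(1+j)) := by
            refine mul_le_mul_of_nonneg_right ?_ (hNnn _)
            have : (2:ℝ)^(d+1) ≤ 2^(b+1) := pow_le_pow_right₀ one_le_two (by omega)
            linarith
      have h3 := ih (1+j) m' hm'b
      -- assemble
      have hEnn : ∀ k : ℕ, 0 ≤ (4:ℝ)^k * 2^(b+2) * N (u/(b:ℝ)^(k+(1+j))) := by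
        intro k
        have := hNnn (u/(b:ℝ)^(k+(1+j)))
        positivity
      have hfirst : (4:ℝ)^0 * 2^(b+2) * N (u/(b:ℝ)^(0+(1+j)))
          ≤ ∑ i ∈ Finset.range (n+1), (4:ℝ)^i * 2^(b+2) * N (u/(b:ℝ)^(i+(1+j))) :=
        Finset.single_le_sum (fun i _ => hEnn i) (Finset.mem_range.mpr (by omega))
      have hNfirst : 2^(b+2) * N (u/(b:ℝ)^(1+j))
          ≤ ∑ i ∈ Finset.range (n+1), (4:ℝ)^i * 2^(b+2) * N (u/(b:ℝ)^(i+(1+j))) := by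
        simpa using hfirst
      set S : ℝ := ∑ i ∈ Finset.range (n+1), (4:ℝ)^i * 2^(b+2) * N (u/(b:ℝ)^(i+(1+j))) with hSdef
      have hSnn : 0 ≤ S := Finset.sum_nonneg fun i _ => hEnn i
      have htarget : ∑ i ∈ Finset.range (n+1+1), (4:ℝ)^i * 2^(b+2) * N (u/(b:ℝ)^(i+j))
          = (∑ i ∈ Finset.range (n+1), (4:ℝ)^(i+1) * 2^(b+2) * N (u/(b:ℝ)^((i+1)+j)))
            + (4:ℝ)^0 * 2^(b+2) * N (u/(b:ℝ)^(0+j)) :=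
        Finset.sum_range_succ' _ _
      have hshift : ∑ i ∈ Finset.range (n+1), (4:ℝ)^(i+1) * 2^(b+2) * N (u/(b:ℝ)^((i+1)+j)) = 4 * S := by
        rw [hSdef, Finset.mul_sum]
        refine Finset.sum_congr rfl fun i _ => ?_
        have he : (i+1)+j = i+(1+j) := by omega
        rw [he, pow_succ]
        ring
      have hlast : 0 ≤ (4:ℝ)^0 * 2^(b+2) * N (u/(b:ℝ)^(0+j)) := by
        have := hNnn (u/(b:ℝ)^(0+j))
        positivity
      calc N (u * m / (b:ℝ)^(n+1+j))
          ≤ 2 * (2^(b+1) * N (u/(b:ℝ)^(1+j))) + 2 * S := by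
            have := hNnn (u/(b:ℝ)^(1+j))
            nlinarith [h1, h2, h3]
        _ ≤ 2 * S + 2 * S := by
            have : 2 * (2^(b+1) * N (u/(b:ℝ)^(1+j))) = 2^(b+2) * N (u/(b:ℝ)^(1+j)) := by ring
            nlinarith [hNfirst]
        _ = 4 * S := by ring
        _ ≤ ∑ i ∈ Finset.range (n+1+1), (4:ℝ)^i * 2^(b+2) * N (u/(b:ℝ)^(i+j)) := by
            rw [htarget, hshift]
            linarith
  -- key uniform bound on (0, u]
  have hkey : ∀ θ : ℝ, θ ∈ Set.Ioc (0:ℝ) u → N θ ≤ 2 * (2^(b+5) * s * c₁ * u ^ α * L x) := by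
    rintro θ ⟨hθ0, hθu⟩
    set mm : ℕ → ℕ := fun n => ⌊θ * (b:ℝ)^n / u⌋₊ with hmmdef
    set g : ℕ → ℝ := fun n => u * (mm n) / (b:ℝ)^n with hgdef
    have hbnR : ∀ n : ℕ, (0:ℝ) < (b:ℝ)^n := fun n => pow_pos hbRpos n
    have hmmle : ∀ n : ℕ, mm n ≤ b^n := by
      intro n
      have h1 : θ * (b:ℝ)^n / u ≤ ((b^n : ℕ) : ℝ) := by
        rw [Nat.cast_pow]
        rw [div_le_iff₀ hu0]
        nlinarith [mul_le_mul_of_nonneg_right hθu (hbnR n).le]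
      calc mm n ≤ ⌊((b^n : ℕ) : ℝ)⌋₊ := Nat.floor_le_floor h1
        _ = b^n := Nat.floor_natCast _
    have hgle : ∀ n : ℕ, g n ≤ θ := by
      intro n
      have h1 : ((mm n : ℕ) : ℝ) ≤ θ * (b:ℝ)^n / u := Nat.floor_le (by positivity)
      rw [hgdef]
      rw [div_le_iff₀ (hbnR n)]
      calc u * (mm n) ≤ u * (θ * (b:ℝ)^n / u) := by
            refine mul_le_mul_of_nonneg_left h1 hu0.le
        _ = θ * (b:ℝ)^n := by field_simp
    have hgub : ∀ n : ℕ, θ - g n ≤ u / (b:ℝ)^n := by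
      intro n
      have h1 : θ * (b:ℝ)^n / u < (mm n) + 1 := Nat.lt_floor_add_one _
      rw [hgdef]
      rw [sub_le_iff_le_add]
      rw [div_lt_iff₀ hu0] at h1
      rw [div_add_div _ _ (ne_of_gt (hbnR n)) (ne_of_gt (hbnR n))]
      rw [le_div_iff₀ (by positivity)]
      nlinarith [hbnR n]
    have hgnn : ∀ n : ℕ, 0 ≤ θ - g n := fun n => sub_nonneg.mpr (hgle n)
    have hNg : ∀ n : ℕ, N (g n) ≤ 2^(b+5) * s * c₁ * u ^ α * L x := by
      intro n
      have h1 := hdig n 0 (mm n) (hmmle n)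
      simp only [Nat.add_zero] at h1
      have h2 : g n = u * (mm n) / (b:ℝ)^n := rfl
      rw [h2]
      exact le_trans h1 (hsum n)
    have hNsplit : ∀ n : ℕ, N θ ≤ 2 * (2^(b+5) * s * c₁ * u ^ α * L x) + 2 * N (θ - g n) := by
      intro n
      have he : θ = g n + (θ - g n) := by ring
      calc N θ = N (g n + (θ - g n)) := by rw [← he]
        _ ≤ 2 * N (g n) + 2 * N (θ - g n) := hNadd _ _
        _ ≤ 2 * (2^(b+5) * s * c₁ * u ^ α * L x) + 2 * N (θ - g n) := by
            nlinarith [hNg n]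
    -- r n → 0 and N (r n) → 0
    have hr0 : Tendsto (fun n : ℕ => θ - g n) atTop (nhds 0) := by
      have hub : Tendsto (fun n : ℕ => u * ((b:ℝ)⁻¹)^n) atTop (nhds 0) := by
        have h1 : Tendsto (fun n : ℕ => ((b:ℝ)⁻¹)^n) atTop (nhds 0) := by
          refine tendsto_pow_atTop_nhds_zero_of_lt_one (by positivity) ?_
          rw [inv_lt_one_iff₀]
          right
          have : (1:ℕ) < b := by omega
          exact_mod_cast this
        have := h1.const_mul u
        simpa using this
      refine squeeze_zero hgnn ?_ hub
      intro n
      rw [inv_pow, ← div_eq_mul_inv]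
      exact hgub n
    have hNr : Tendsto (fun n : ℕ => N (θ - g n)) atTop (nhds 0) := by
      have h0 : (0:ℝ) = ∫ (_ : ℝ), (0:ℝ) ∂(μ s) := by simp
      rw [h0]
      refine tendsto_integral_of_dominated_convergence (fun _ => (2:ℝ))
        (fun n => (hcont _).aestronglyMeasurable) (integrable_const 2)
        (fun n => ae_of_all _ fun y => habs _ y) (ae_of_all _ fun y => ?_)
      have h1 : Tendsto (fun n : ℕ => (θ - g n) * y) atTop (nhds 0) := by
        have := hr0.mul_const y
        simpa using this
      have h2 : Tendsto (fun n : ℕ => Real.cos ((θ - g n) * y)) atTop (nhds 1) := by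
        have := (Real.continuous_cos.tendsto 0).comp h1
        simpa [Function.comp_def] using this
      have := h2.const_sub 1
      simpa using this
    have hfin : Tendsto (fun n : ℕ => 2 * (2^(b+5) * s * c₁ * u ^ α * L x) + 2 * N (θ - g n))
        atTop (nhds (2 * (2^(b+5) * s * c₁ * u ^ α * L x))) := by
      have h1 := (hNr.const_mul 2).const_add (2 * (2^(b+5) * s * c₁ * u ^ α * L x))
      simpa using h1
    exact ge_of_tendsto' hfin hNsplit
  -- truncation inequality via Fubini
  haveI hfinm : IsFiniteMeasure (volume.restrict (Set.Ioc (0:ℝ) u)) := by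
    constructor
    rw [Measure.restrict_apply_univ]
    exact measure_Ioc_lt_top
  have hprodcont : Continuous (fun p : ℝ × ℝ => 1 - Real.cos (p.2 * p.1)) := by
    exact continuous_const.sub (Real.continuous_cos.comp (continuous_snd.mul continuous_fst))
  have hprodInt : Integrable (Function.uncurry (fun y θ : ℝ => 1 - Real.cos (θ * y)))
      ((μ s).prod (volume.restrict (Set.Ioc (0:ℝ) u))) := by
    refine Integrable.mono' (integrable_const 2) hprodcont.aestronglyMeasurable (ae_of_all _ ?_)
    rintro ⟨y, θ⟩
    exact habs θ y
  have hswap := integral_integral_swap hprodInt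
  set H : ℝ → ℝ := fun y => ∫ θ in Set.Ioc (0:ℝ) u, (1 - Real.cos (θ * y)) ∂volume with hHdef
  have hswap2 : ∫ y, H y ∂(μ s) = ∫ θ in Set.Ioc (0:ℝ) u, N θ ∂volume := hswap
  have hIocvol : (volume (Set.Ioc (0:ℝ) u)).toReal = u := by
    rw [Real.volume_Ioc]
    rw [ENNReal.toReal_ofReal (by linarith)]
    ring
  have hNIntOn : IntegrableOn N (Set.Ioc (0:ℝ) u) volume := by
    have h1 := hprodInt.integral_prod_right
    exact h1
  have hC : (0:ℝ) < 2^(b+5) * s * c₁ * u ^ α * L x := by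
    have huα : (0:ℝ) < u ^ α := Real.rpow_pos_of_pos hu0 α
    positivity
  have hRHS : ∫ θ in Set.Ioc (0:ℝ) u, N θ ∂volume
      ≤ 2 * (2^(b+5) * s * c₁ * u ^ α * L x) * u := by
    calc ∫ θ in Set.Ioc (0:ℝ) u, N θ ∂volume
        ≤ ∫ _θ in Set.Ioc (0:ℝ) u, (2 * (2^(b+5) * s * c₁ * u ^ α * L x)) ∂volume := by
          refine setIntegral_mono_on hNIntOn ?_ measurableSet_Ioc fun θ hθ => hkey θ hθ
          exact (integrableOn_const_iff).mpr (Or.inr measure_Ioc_lt_top)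
      _ = 2 * (2^(b+5) * s * c₁ * u ^ α * L x) * u := by
          rw [setIntegral_const, smul_eq_mul, measureReal_def, hIocvol]
          ring
  have hHint : Integrable H (μ s) := hprodInt.integral_prod_left
  have hHnn : ∀ y : ℝ, 0 ≤ H y := by
    intro y
    exact integral_nonneg fun θ => sub_nonneg.mpr (Real.cos_le_one _)
  have hHge : ∀ y : ℝ, x < |y| → u/2 ≤ H y := by
    intro y hy
    have hy0 : y ≠ 0 := by
      intro h
      rw [h] at hy
      simp at hy
      linarith
    have hyabs : (0:ℝ) < |y| := lt_trans hx0 hy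
    have hform : H y = u - Real.sin (u*y)/y := by
      have h1 : H y = ∫ θ in (0:ℝ)..u, (1 - Real.cos (θ * y)) := by
        rw [intervalIntegral.integral_of_le hu0.le]
      have h2 : ∫ θ in (0:ℝ)..u, (1 - Real.cos (θ * y))
          = (∫ θ in (0:ℝ)..u, (1:ℝ)) - ∫ θ in (0:ℝ)..u, Real.cos (θ * y) := by
        refine intervalIntegral.integral_sub intervalIntegrable_const ?_
        exact (Real.continuous_cos.comp (continuous_id.mul continuous_const)).intervalIntegrable 0 u
      have h3 : (∫ θ in (0:ℝ)..u, (1:ℝ)) = u := by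
        rw [intervalIntegral.integral_const]
        simp
      have h4 : ∫ θ in (0:ℝ)..u, Real.cos (θ * y) = Real.sin (u*y)/y := by
        rw [intervalIntegral.integral_comp_mul_right Real.cos hy0]
        rw [integral_cos]
        simp
        ring
      rw [h1, h2, h3, h4]
    rw [hform]
    have h5 : Real.sin (u*y)/y ≤ 1/|y| := by
      calc Real.sin (u*y)/y ≤ |Real.sin (u*y)/y| := le_abs_self _
        _ = |Real.sin (u*y)|/|y| := abs_div _ _
        _ ≤ 1/|y| := div_le_div₀ (by norm_num) (Real.abs_sin_le_one _) hyabs le_rfl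
    have h6 : (1:ℝ)/|y| < 1/x := by
      exact one_div_lt_one_div_of_lt hx0 hy
    have h7 : (1:ℝ)/x = u/2 := by rw [hudef]; ring
    linarith
  -- final chain
  set T : ℝ := (μ s {y : ℝ | x < |y|}).toReal with hTdef
  have hSmeas : MeasurableSet {y : ℝ | x < |y|} :=
    measurableSet_lt measurable_const continuous_abs.measurable
  have hchain : (u/2) * T ≤ 2 * (2^(b+5) * s * c₁ * u ^ α * L x) * u := by
    have h1 : (u/2) * T = ∫ _y in {y : ℝ | x < |y|}, (u/2) ∂(μ s) := by
      rw [setIntegral_const, smul_eq_mul, hTdef, measureReal_def]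
      ring
    have h2 : ∫ _y in {y : ℝ | x < |y|}, (u/2) ∂(μ s) ≤ ∫ y in {y : ℝ | x < |y|}, H y ∂(μ s) := by
      refine setIntegral_mono_on ?_ hHint.integrableOn hSmeas fun y hy => hHge y hy
      exact (integrableOn_const_iff).mpr (Or.inr (measure_lt_top _ _))
    have h3 : ∫ y in {y : ℝ | x < |y|}, H y ∂(μ s) ≤ ∫ y, H y ∂(μ s) :=
      setIntegral_le_integral hHint (ae_of_all _ hHnn)
    rw [h1]
    calc ∫ _y in {y : ℝ | x < |y|}, (u/2) ∂(μ s) ≤ ∫ y in {y : ℝ | x < |y|}, H y ∂(μ s) := h2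
      _ ≤ ∫ y, H y ∂(μ s) := h3
      _ = ∫ θ in Set.Ioc (0:ℝ) u, N θ ∂volume := hswap2
      _ ≤ 2 * (2^(b+5) * s * c₁ * u ^ α * L x) * u := hRHS
  have hT4 : T ≤ 4 * (2^(b+5) * s * c₁ * u ^ α * L x) := by
    have h1 : (u/2) * T ≤ (u/2) * (4 * (2^(b+5) * s * c₁ * u ^ α * L x)) := by
      calc (u/2) * T ≤ 2 * (2^(b+5) * s * c₁ * u ^ α * L x) * u := hchain
        _ = (u/2) * (4 * (2^(b+5) * s * c₁ * u ^ α * L x)) := by ring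
    exact le_of_mul_le_mul_left h1 (by linarith)
  -- convert u^α to x^(-α)
  have huαb : u ^ α ≤ 4 * x ^ (-α) := by
    have h1 : u ^ α = (2:ℝ)^α / x^α := by
      rw [hudef, Real.div_rpow (by norm_num) hx0.le]
    have h2 : (2:ℝ)^α ≤ 4 := by
      calc (2:ℝ)^α ≤ (2:ℝ)^(2:ℝ) := Real.rpow_le_rpow_of_exponent_le one_le_two hα2.le
        _ = 4 := by
          rw [show (2:ℝ) = ((2:ℕ):ℝ) from by norm_num, Real.rpow_natCast]
          norm_num
    have h3 : x ^ (-α) = (x^α)⁻¹ := Real.rpow_neg hx0.le α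
    have h4 : (0:ℝ) < x^α := Real.rpow_pos_of_pos hx0 α
    rw [h1, h3]
    rw [div_eq_mul_inv]
    exact mul_le_mul_of_nonneg_right h2 (by positivity)
  calc T ≤ 4 * (2^(b+5) * s * c₁ * u ^ α * L x) := hT4
    _ ≤ 4 * (2^(b+5) * s * c₁ * (4 * x ^ (-α)) * L x) := by
        refine mul_le_mul_of_nonneg_left ?_ (by norm_num)
        have h5 : (0:ℝ) ≤ 2^(b+5) * s * c₁ := by positivity
        have h6 := hLxpos.le
        nlinarith [mul_le_mul_of_nonneg_left huαb h5]
    _ = (2^(b+9) * c₁) * s * x ^ (-α) * L x := by ring
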